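/- The matrix B₀ is skew-symmetric, and μ_even(y, B₀) = (α₂(y), −B₀) and μ_odd(y, −B₀) = (α₁(y), B₀). (Thus the pentagram-map transition equations for the y-parameters are exactly the Y-pattern dynamics of the cluster algebra with exchange matrix B₀.) -/

import Mathlib

open scoped Classical

noncomputable section

/-- The `Y`-seed mutation `μ_k` acting on a seed `(y, B)`, where the tuple
`y = (y₁,…,y_{2n})` and the `2n × 2n` matrix `B` are encoded as `2n`-periodic
functions on `ℤ` (the index `j` representing the vertex `j mod 2n`). -/
def mutY {K : Type*} [Field K] (n : ℕ) (k : ℤ)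
    (p : (ℤ → K) × (ℤ → ℤ → ℤ)) : (ℤ → K) × (ℤ → ℤ → ℤ) :=
  (fun j => if j ≡ k [ZMOD (2*n)] then (p.1 k)⁻¹
    else p.1 j * p.1 k ^ (max (p.2 k j) 0) * (1 + p.1 k) ^ (-(p.2 k j)),
   fun i j => if i ≡ k [ZMOD (2*n)] ∨ j ≡ k [ZMOD (2*n)] then -(p.2 i j)
    else p.2 i j + (p.2 i k).sign * max (p.2 i k * p.2 k j) 0)

/-- The exchange matrix `B₀`:  `b⁰_{ij} = (−1)^j` if `i−j ≡ ±1 (mod 2n)`,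
`b⁰_{ij} = (−1)^{j+1}` if `i−j ≡ ±3 (mod 2n)`, and `b⁰_{ij} = 0` otherwise. -/
def B0 (n : ℕ) : ℤ → ℤ → ℤ := fun i j =>
  if i - j ≡ 1 [ZMOD (2*n)] ∨ i - j ≡ -1 [ZMOD (2*n)] then
    (if Even j then 1 else -1)
  else if i - j ≡ 3 [ZMOD (2*n)] ∨ i - j ≡ -3 [ZMOD (2*n)] then
    (if Even j then -1 else 1)
  else 0

/-- The pentagram transition map `α₁`:
`y'_j = y_{j−3} y_j y_{j+3} (1+y_{j−1})(1+y_{j+1})/((1+y_{j−3})(1+y_{j+3}))` for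
`j` even and `y'_j = y_j⁻¹` for `j` odd. -/
def alpha1 {K : Type*} [Field K] (y : ℤ → K) : ℤ → K := fun j =>
  if Even j then
    y (j-3) * y j * y (j+3) *
      ((1 + y (j-1)) * (1 + y (j+1)) / ((1 + y (j-3)) * (1 + y (j+3))))
  else (y j)⁻¹

/-- The pentagram transition map `α₂`: `y''_j = y_j⁻¹` for `j` even and
`y''_j = y_{j−3} y_j y_{j+3} (1+y_{j−1})(1+y_{j+1})/((1+y_{j−3})(1+y_{j+3}))`
for `j` odd. -/
def alpha2 {K : Type*} [Field K] (y : ℤ → K) : ℤ → K := fun j =>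
  if Even j then (y j)⁻¹
  else y (j-3) * y j * y (j+3) *
    ((1 + y (j-1)) * (1 + y (j+1)) / ((1 + y (j-3)) * (1 + y (j+3))))

namespace PentaAux

lemma dv_transfer {N a b : ℤ} (h : N ∣ a) (e : a + b = 0) : N ∣ b := by
  rcases h with ⟨t, rfl⟩; exact ⟨-t, by linarith⟩

lemma dv_iff {n : ℕ} {a b : ℤ} : a ≡ b [ZMOD (2*(n:ℤ))] ↔ (2*(n:ℤ)) ∣ (a - b) := by
  rw [Int.modEq_iff_dvd]
  constructor <;> (rintro ⟨t, ht⟩; exact ⟨-t, by linarith⟩)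

lemma not_dv {n : ℕ} (hn : 4 ≤ n) {c : ℤ} (h0 : c ≠ 0) (h7 : c.natAbs ≤ 7) :
    ¬ (2*(n:ℤ)) ∣ c := by
  intro h
  have h1 : (2*(n:ℤ)).natAbs ∣ c.natAbs := Int.natAbs_dvd_natAbs.mpr h
  have h2 : (2*(n:ℤ)).natAbs = 2*n := by simp [Int.natAbs_mul]
  have h3 := Nat.le_of_dvd (by omega) h1
  omega

lemma contra2 {n : ℕ} (hn : 4 ≤ n) {a b u v : ℤ} (h1 : a ≡ b [ZMOD (2*(n:ℤ))])
    (h2 : u ≡ v [ZMOD (2*(n:ℤ))]) (c : ℤ) (hc : (a - b) + (u - v) = c)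
    (h0 : c ≠ 0) (h7 : c.natAbs ≤ 7) : False := by
  apply not_dv hn h0 h7
  rw [← hc]; exact dvd_add (dv_iff.1 h1) (dv_iff.1 h2)

lemma dv_even {n : ℕ} {c : ℤ} (h : (2*(n:ℤ)) ∣ c) : (2:ℤ) ∣ c :=
  dvd_trans ⟨(n:ℤ), by ring⟩ h

/-- The basic profile function: `Am u = 1` if `u ≡ ±1`, `-1` if `u ≡ ±3`, `0` otherwise. -/
def Am (n : ℕ) : ℤ → ℤ := fun u =>
  if u ≡ 1 [ZMOD (2*(n:ℤ))] ∨ u ≡ -1 [ZMOD (2*(n:ℤ))] then 1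
  else if u ≡ 3 [ZMOD (2*(n:ℤ))] ∨ u ≡ -3 [ZMOD (2*(n:ℤ))] then -1 else 0

lemma Am_cases (n : ℕ) (u : ℤ) : Am n u = 1 ∨ Am n u = -1 ∨ Am n u = 0 := by
  unfold Am; split_ifs <;> tauto

lemma Am_congr {n : ℕ} {u v : ℤ} (h : u ≡ v [ZMOD (2*(n:ℤ))]) : Am n u = Am n v := by
  unfold Am
  have e1 : (u ≡ 1 [ZMOD (2*(n:ℤ))] ∨ u ≡ -1 [ZMOD (2*(n:ℤ))]) ↔
      (v ≡ 1 [ZMOD (2*(n:ℤ))] ∨ v ≡ -1 [ZMOD (2*(n:ℤ))]) := by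
    constructor
    · rintro (h'|h')
      · exact Or.inl (h.symm.trans h')
      · exact Or.inr (h.symm.trans h')
    · rintro (h'|h')
      · exact Or.inl (h.trans h')
      · exact Or.inr (h.trans h')
  have e3 : (u ≡ 3 [ZMOD (2*(n:ℤ))] ∨ u ≡ -3 [ZMOD (2*(n:ℤ))]) ↔
      (v ≡ 3 [ZMOD (2*(n:ℤ))] ∨ v ≡ -3 [ZMOD (2*(n:ℤ))]) := by
    constructor
    · rintro (h'|h')
      · exact Or.inl (h.symm.trans h')
      · exact Or.inr (h.symm.trans h')
    · rintro (h'|h')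
      · exact Or.inl (h.trans h')
      · exact Or.inr (h.trans h')
  simp only [e1, e3]

lemma Am_even {n : ℕ} {u : ℤ} (h : (2:ℤ) ∣ u) : Am n u = 0 := by
  unfold Am
  split_ifs with h1 h3
  · exfalso
    rcases h1 with h'|h' <;> (have := dv_even (dv_iff.1 h'); omega)
  · exfalso
    rcases h3 with h'|h' <;> (have := dv_even (dv_iff.1 h'); omega)
  · rfl

lemma Am_neg (n : ℕ) (u : ℤ) : Am n (-u) = Am n u := by
  unfold Am
  have e1 : ((-u) ≡ 1 [ZMOD (2*(n:ℤ))] ∨ (-u) ≡ -1 [ZMOD (2*(n:ℤ))]) ↔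
      (u ≡ 1 [ZMOD (2*(n:ℤ))] ∨ u ≡ -1 [ZMOD (2*(n:ℤ))]) := by
    rw [dv_iff, dv_iff, dv_iff, dv_iff]
    constructor
    · rintro (h'|h')
      · exact Or.inr (dv_transfer h' (by ring))
      · exact Or.inl (dv_transfer h' (by ring))
    · rintro (h'|h')
      · exact Or.inr (dv_transfer h' (by ring))
      · exact Or.inl (dv_transfer h' (by ring))
  have e3 : ((-u) ≡ 3 [ZMOD (2*(n:ℤ))] ∨ (-u) ≡ -3 [ZMOD (2*(n:ℤ))]) ↔
      (u ≡ 3 [ZMOD (2*(n:ℤ))] ∨ u ≡ -3 [ZMOD (2*(n:ℤ))]) := by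
    rw [dv_iff, dv_iff, dv_iff, dv_iff]
    constructor
    · rintro (h'|h')
      · exact Or.inr (dv_transfer h' (by ring))
      · exact Or.inl (dv_transfer h' (by ring))
    · rintro (h'|h')
      · exact Or.inr (dv_transfer h' (by ring))
      · exact Or.inl (dv_transfer h' (by ring))
  simp only [e1, e3]

lemma Am_odd {n : ℕ} {u : ℤ} (h : Am n u ≠ 0) : ¬ (2:ℤ) ∣ u :=
  fun h2 => h (Am_even h2)
/-- `Ed n ε m t` : the residue of `t` is among the first `m` mutation points `2a+ε`. -/
def Ed (n : ℕ) (ε : ℤ) (m : ℕ) (t : ℤ) : Prop :=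
  ∃ a : ℕ, a < m ∧ t ≡ 2*(a:ℤ)+ε [ZMOD (2*(n:ℤ))]

lemma Ed_par {n : ℕ} {ε : ℤ} {m : ℕ} {t : ℤ} (h : Ed n ε m t) : (2:ℤ) ∣ t - ε := by
  rcases h with ⟨a, _, h⟩
  have := dv_even (dv_iff.1 h)
  omega

lemma Ed_succ {n : ℕ} {ε : ℤ} {m : ℕ} {t : ℤ} :
    Ed n ε (m+1) t ↔ Ed n ε m t ∨ t ≡ 2*(m:ℤ)+ε [ZMOD (2*(n:ℤ))] := by
  constructor
  · rintro ⟨a, ha, h⟩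
    rcases Nat.lt_succ_iff_lt_or_eq.1 ha with ha' | rfl
    · exact Or.inl ⟨a, ha', h⟩
    · exact Or.inr h
  · rintro (⟨a, ha, h⟩ | h)
    · exact ⟨a, Nat.lt_succ_of_lt ha, h⟩
    · exact ⟨m, Nat.lt_succ_self m, h⟩

lemma Ed_not_new {n : ℕ} {ε : ℤ} {m : ℕ} (hm : m < n) {t : ℤ}
    (h : t ≡ 2*(m:ℤ)+ε [ZMOD (2*(n:ℤ))]) : ¬ Ed n ε m t := by
  rintro ⟨a, ha, h'⟩
  have hd : (2*(n:ℤ)) ∣ (2*(m:ℤ) - 2*(a:ℤ)) := by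
    have h1 := dv_iff.1 h
    have h2 := dv_iff.1 h'
    have := dvd_sub h2 h1
    rcases this with ⟨t', ht'⟩
    exact ⟨t', by linarith⟩
  have := Int.le_of_dvd (by omega) hd
  omega

lemma Ed_zero {n : ℕ} {ε : ℤ} {t : ℤ} : ¬ Ed n ε 0 t := by
  rintro ⟨a, ha, _⟩; omega

lemma Ed_top {n : ℕ} (hn : 0 < n) {ε : ℤ} {t : ℤ} :
    Ed n ε n t ↔ (2:ℤ) ∣ t - ε := by
  constructor
  · exact Ed_par
  · rintro ⟨s, hs⟩
    have hn' : (0:ℤ) < (n:ℤ) := by exact_mod_cast hn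
    have h0 : 0 ≤ s % (n:ℤ) := Int.emod_nonneg s (by omega)
    have h1 : s % (n:ℤ) < (n:ℤ) := Int.emod_lt_of_pos s hn'
    refine ⟨(s % (n:ℤ)).toNat, ?_, ?_⟩
    · omega
    · rw [dv_iff]
      have ht : ((s % (n:ℤ)).toNat : ℤ) = s % (n:ℤ) := Int.toNat_of_nonneg h0
      rw [ht]
      have he : s % (n:ℤ) = s - (n:ℤ) * (s / (n:ℤ)) := by
        rw [Int.emod_def]
      exact ⟨s / (n:ℤ), by rw [he]; linarith [hs]⟩

/-- Sign profile of the matrix: column sign depends on parity of `j - ε`. -/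
def Mm (n : ℕ) (ε : ℤ) : ℤ → ℤ → ℤ := fun i j =>
  if Even (j - ε) then Am n (i-j) else -(Am n (i-j))

/-- Accumulated quadratic corrections to the exchange matrix after `m` steps. -/
def Cm (n : ℕ) (ε : ℤ) (m : ℕ) (i j : ℤ) : ℤ :=
  ∑ a ∈ Finset.range m,
    (Am n (i - (2*(a:ℤ)+ε))).sign *
      max (Am n (i - (2*(a:ℤ)+ε)) * -(Am n ((2*(a:ℤ)+ε) - j))) 0

/-- The exchange matrix after `m` steps. -/
def Bst (n : ℕ) (ε : ℤ) (m : ℕ) : ℤ → ℤ → ℤ := fun i j =>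
  (if (Ed n ε m i ↔ Ed n ε m j) then Mm n ε i j else -(Mm n ε i j)) + Cm n ε m i j

variable {K : Type*} [Field K]

def facF (n : ℕ) (ε : ℤ) (y : ℤ → K) (m : ℕ) (t : ℤ) : K :=
  if Ed n ε m t then y t * (1 + y t)⁻¹ else 1

def facG (n : ℕ) (ε : ℤ) (y : ℤ → K) (m : ℕ) (t : ℤ) : K :=
  if Ed n ε m t then 1 + y t else 1

/-- The `y`-vector after `m` steps. -/
def Yst (n : ℕ) (ε : ℤ) (y : ℤ → K) (m : ℕ) : ℤ → K := fun j =>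
  if Ed n ε m j then (y j)⁻¹
  else y j * facF n ε y m (j-3) * facG n ε y m (j-1) * facG n ε y m (j+1) *
    facF n ε y m (j+3)

lemma Mm_two (n : ℕ) (i j : ℤ) : Mm n 2 i j = B0 n i j := by
  unfold Mm Am B0
  split_ifs <;> simp_all [Int.even_sub] <;> norm_num

lemma Mm_one (n : ℕ) (i j : ℤ) : Mm n 1 i j = -(B0 n i j) := by
  unfold Mm Am B0
  split_ifs <;> simp_all [Int.even_sub, Int.even_add_one] <;> norm_num <;>
    exact absurd ‹Even j› (Int.not_even_iff_odd.mpr ‹Odd j›)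

variable {K : Type*} [Field K]

lemma y_congr {n : ℕ} {y : ℤ → K} (hyper : ∀ j : ℤ, y (j + 2*(n:ℤ)) = y j)
    {a b : ℤ} (h : a ≡ b [ZMOD (2*(n:ℤ))]) : y a = y b := by
  have key : ∀ (s : ℕ) (j : ℤ), y (j + 2*(n:ℤ)*s) = y j := by
    intro s
    induction s with
    | zero => intro j; simp
    | succ s ih =>
      intro j
      have h1 : j + 2*(n:ℤ)*(s+1 : ℕ) = (j + 2*(n:ℤ)*s) + 2*(n:ℤ) := by push_cast; ring
      rw [h1, hyper, ih]
  rcases dv_iff.1 h with ⟨t, ht⟩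
  rcases le_or_gt 0 t with h0 | h0
  · have e : a = b + 2*(n:ℤ)*(t.toNat : ℤ) := by rw [Int.toNat_of_nonneg h0]; linarith
    rw [e, key]
  · have e : b = a + 2*(n:ℤ)*((-t).toNat : ℤ) := by
      rw [Int.toNat_of_nonneg (by omega)]; linarith
    rw [e, key]

lemma Yst_at_k {n : ℕ} {ε : ℤ} {y : ℤ → K} {m : ℕ} (hm : m < n) :
    Yst n ε y m (2*(m:ℤ)+ε) = y (2*(m:ℤ)+ε) := by
  have h1 : ¬ Ed n ε m (2*(m:ℤ)+ε - 3) := fun hE => by have := Ed_par hE; omega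
  have h2 : ¬ Ed n ε m (2*(m:ℤ)+ε - 1) := fun hE => by have := Ed_par hE; omega
  have h3 : ¬ Ed n ε m (2*(m:ℤ)+ε + 1) := fun hE => by have := Ed_par hE; omega
  have h4 : ¬ Ed n ε m (2*(m:ℤ)+ε + 3) := fun hE => by have := Ed_par hE; omega
  unfold Yst
  rw [if_neg (Ed_not_new hm (Int.ModEq.refl _))]
  simp only [facF, facG]
  rw [if_neg h1, if_neg h2, if_neg h3, if_neg h4]
  ring

lemma Bst_col {n : ℕ} {ε : ℤ} {m : ℕ} (hm : m < n) (i : ℤ) :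
    Bst n ε m i (2*(m:ℤ)+ε) = Am n (i - (2*(m:ℤ)+ε)) := by
  have hk : ¬ Ed n ε m (2*(m:ℤ)+ε) := Ed_not_new hm (Int.ModEq.refl _)
  have hC : Cm n ε m i (2*(m:ℤ)+ε) = 0 := by
    apply Finset.sum_eq_zero
    intro a _
    rw [Am_even (by omega : (2:ℤ) ∣ (2*(a:ℤ)+ε) - (2*(m:ℤ)+ε))]
    simp
  have hkE : Even ((2*(m:ℤ)+ε) - ε) := ⟨(m:ℤ), by ring⟩
  unfold Bst
  rw [hC, add_zero]
  by_cases hEi : Ed n ε m i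
  · have h2 : (2:ℤ) ∣ i - (2*(m:ℤ)+ε) := by
      have := Ed_par hEi; omega
    rw [if_neg (fun hiff => hk (hiff.mp hEi)), Mm, if_pos hkE, Am_even h2]
    norm_num
  · rw [if_pos (iff_of_false hEi hk), Mm, if_pos hkE]

lemma Bst_row {n : ℕ} {ε : ℤ} {m : ℕ} (hm : m < n) (j : ℤ) :
    Bst n ε m (2*(m:ℤ)+ε) j = -(Am n ((2*(m:ℤ)+ε) - j)) := by
  have hk : ¬ Ed n ε m (2*(m:ℤ)+ε) := Ed_not_new hm (Int.ModEq.refl _)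
  have hC : Cm n ε m (2*(m:ℤ)+ε) j = 0 := by
    apply Finset.sum_eq_zero
    intro a _
    rw [Am_even (by omega : (2:ℤ) ∣ (2*(m:ℤ)+ε) - (2*(a:ℤ)+ε))]
    simp
  unfold Bst
  rw [hC, add_zero]
  by_cases hEj : Ed n ε m j
  · have hpar : Even (j - ε) := by
      rcases Ed_par hEj with ⟨r, hr⟩; exact ⟨r, by omega⟩
    have h2 : (2:ℤ) ∣ (2*(m:ℤ)+ε) - j := by
      rcases hpar with ⟨r, hr⟩; omega
    rw [if_neg (fun hiff => hk (hiff.mpr hEj)), Mm, if_pos hpar, Am_even h2]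
  · rw [if_pos (iff_of_false hk hEj), Mm]
    by_cases hpar : Even (j - ε)
    · have h2 : (2:ℤ) ∣ (2*(m:ℤ)+ε) - j := by
        rcases hpar with ⟨r, hr⟩; omega
      rw [if_pos hpar, Am_even h2]
      norm_num
    · rw [if_neg hpar]

lemma facF_succ {n : ℕ} {ε : ℤ} {y : ℤ → K} (hyper : ∀ j : ℤ, y (j + 2*(n:ℤ)) = y j)
    {m : ℕ} (hm : m < n) (t : ℤ) :
    facF n ε y (m+1) t = facF n ε y m t *
      (if t ≡ 2*(m:ℤ)+ε [ZMOD (2*(n:ℤ))] then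
        y (2*(m:ℤ)+ε) * (1 + y (2*(m:ℤ)+ε))⁻¹ else 1) := by
  unfold facF
  by_cases h : t ≡ 2*(m:ℤ)+ε [ZMOD (2*(n:ℤ))]
  · rw [if_pos h, if_pos (Ed_succ.2 (Or.inr h)), if_neg (Ed_not_new hm h), one_mul,
      y_congr hyper h]
  · rw [if_neg h, mul_one]
    have e : Ed n ε (m+1) t ↔ Ed n ε m t := by rw [Ed_succ]; tauto
    simp only [e]

lemma facG_succ {n : ℕ} {ε : ℤ} {y : ℤ → K} (hyper : ∀ j : ℤ, y (j + 2*(n:ℤ)) = y j)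
    {m : ℕ} (hm : m < n) (t : ℤ) :
    facG n ε y (m+1) t = facG n ε y m t *
      (if t ≡ 2*(m:ℤ)+ε [ZMOD (2*(n:ℤ))] then (1 + y (2*(m:ℤ)+ε)) else 1) := by
  unfold facG
  by_cases h : t ≡ 2*(m:ℤ)+ε [ZMOD (2*(n:ℤ))]
  · rw [if_pos h, if_pos (Ed_succ.2 (Or.inr h)), if_neg (Ed_not_new hm h), one_mul,
      y_congr hyper h]
  · rw [if_neg h, mul_one]
    have e : Ed n ε (m+1) t ↔ Ed n ε m t := by rw [Ed_succ]; tauto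
    simp only [e]

lemma step {n : ℕ} (hn : 4 ≤ n) {ε : ℤ} {y : ℤ → K}
    (hyper : ∀ j : ℤ, y (j + 2*(n:ℤ)) = y j)
    {m : ℕ} (hm : m < n) :
    mutY n (2*(m:ℤ)+ε) (Yst n ε y m, Bst n ε m) =
      (Yst n ε y (m+1), Bst n ε (m+1)) := by
  have hfst : (mutY n (2*(m:ℤ)+ε) (Yst n ε y m, Bst n ε m)).1 = Yst n ε y (m+1) := by
    funext j
    simp only [mutY]
    by_cases hjk : j ≡ 2*(m:ℤ)+ε [ZMOD (2*(n:ℤ))]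
    · rw [if_pos hjk, Yst_at_k hm]
      have e : Yst n ε y (m+1) j = (y j)⁻¹ := by
        unfold Yst; rw [if_pos (Ed_succ.2 (Or.inr hjk))]
      rw [e, y_congr hyper hjk]
    · rw [if_neg hjk, Yst_at_k hm, Bst_row hm]
      by_cases hEj : Ed n ε m j
      · have h2 : (2:ℤ) ∣ (2*(m:ℤ)+ε) - j := by
          have := Ed_par hEj; omega
        have e1 : Yst n ε y m j = (y j)⁻¹ := by unfold Yst; rw [if_pos hEj]
        have e2 : Yst n ε y (m+1) j = (y j)⁻¹ := by
          unfold Yst; rw [if_pos (Ed_succ.2 (Or.inl hEj))]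
        rw [Am_even h2, e1, e2]
        norm_num
      · have hE1 : ¬ Ed n ε (m+1) j := by rw [Ed_succ]; tauto
        have hY0 : Yst n ε y m j = y j * facF n ε y m (j-3) * facG n ε y m (j-1) *
            facG n ε y m (j+1) * facF n ε y m (j+3) := by
          unfold Yst; rw [if_neg hEj]
        have hY1 : Yst n ε y (m+1) j = y j * facF n ε y (m+1) (j-3) *
            facG n ε y (m+1) (j-1) * facG n ε y (m+1) (j+1) *
            facF n ε y (m+1) (j+3) := by
          unfold Yst; rw [if_neg hE1]
        rw [hY0, hY1, facF_succ hyper hm, facG_succ hyper hm, facG_succ hyper hm,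
          facF_succ hyper hm]
        by_cases h1 : (2*(m:ℤ)+ε) - j ≡ 1 [ZMOD (2*(n:ℤ))]
        · have hA : Am n ((2*(m:ℤ)+ε) - j) = 1 := by
            unfold Am; rw [if_pos (Or.inl h1)]
          have hc1 : (j+1) ≡ 2*(m:ℤ)+ε [ZMOD (2*(n:ℤ))] :=
            dv_iff.2 (dv_transfer (dv_iff.1 h1) (by ring))
          have hc2 : ¬ (j-1) ≡ 2*(m:ℤ)+ε [ZMOD (2*(n:ℤ))] :=
            fun hc => contra2 hn h1 hc (-2) (by ring) (by norm_num) (by norm_num)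
          have hc3 : ¬ (j-3) ≡ 2*(m:ℤ)+ε [ZMOD (2*(n:ℤ))] :=
            fun hc => contra2 hn h1 hc (-4) (by ring) (by norm_num) (by norm_num)
          have hc4 : ¬ (j+3) ≡ 2*(m:ℤ)+ε [ZMOD (2*(n:ℤ))] :=
            fun hc => contra2 hn h1 hc 2 (by ring) (by norm_num) (by norm_num)
          rw [hA, if_pos hc1, if_neg hc2, if_neg hc3, if_neg hc4]
          have e1 : (max (-(1:ℤ)) 0) = 0 := by norm_num
          have e2 : (-(-(1:ℤ))) = 1 := by norm_num
          rw [e1, e2, zpow_zero, zpow_one]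
          ring
        · by_cases h2 : (2*(m:ℤ)+ε) - j ≡ -1 [ZMOD (2*(n:ℤ))]
          · have hA : Am n ((2*(m:ℤ)+ε) - j) = 1 := by
              unfold Am; rw [if_pos (Or.inr h2)]
            have hc1 : ¬ (j+1) ≡ 2*(m:ℤ)+ε [ZMOD (2*(n:ℤ))] :=
              fun hc => contra2 hn h2 hc 2 (by ring) (by norm_num) (by norm_num)
            have hc2 : (j-1) ≡ 2*(m:ℤ)+ε [ZMOD (2*(n:ℤ))] :=
              dv_iff.2 (dv_transfer (dv_iff.1 h2) (by ring))
            have hc3 : ¬ (j-3) ≡ 2*(m:ℤ)+ε [ZMOD (2*(n:ℤ))] :=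
              fun hc => contra2 hn h2 hc (-2) (by ring) (by norm_num) (by norm_num)
            have hc4 : ¬ (j+3) ≡ 2*(m:ℤ)+ε [ZMOD (2*(n:ℤ))] :=
              fun hc => contra2 hn h2 hc 4 (by ring) (by norm_num) (by norm_num)
            rw [hA, if_neg hc1, if_pos hc2, if_neg hc3, if_neg hc4]
            have e1 : (max (-(1:ℤ)) 0) = 0 := by norm_num
            have e2 : (-(-(1:ℤ))) = 1 := by norm_num
            rw [e1, e2, zpow_zero, zpow_one]
            ring
          · by_cases h3 : (2*(m:ℤ)+ε) - j ≡ 3 [ZMOD (2*(n:ℤ))]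
            · have hA : Am n ((2*(m:ℤ)+ε) - j) = -1 := by
                unfold Am
                rw [if_neg (by tauto), if_pos (Or.inl h3)]
              have hc1 : ¬ (j+1) ≡ 2*(m:ℤ)+ε [ZMOD (2*(n:ℤ))] :=
                fun hc => contra2 hn h3 hc (-2) (by ring) (by norm_num) (by norm_num)
              have hc2 : ¬ (j-1) ≡ 2*(m:ℤ)+ε [ZMOD (2*(n:ℤ))] :=
                fun hc => contra2 hn h3 hc (-4) (by ring) (by norm_num) (by norm_num)
              have hc3 : ¬ (j-3) ≡ 2*(m:ℤ)+ε [ZMOD (2*(n:ℤ))] :=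
                fun hc => contra2 hn h3 hc (-6) (by ring) (by norm_num) (by norm_num)
              have hc4 : (j+3) ≡ 2*(m:ℤ)+ε [ZMOD (2*(n:ℤ))] :=
                dv_iff.2 (dv_transfer (dv_iff.1 h3) (by ring))
              rw [hA, if_neg hc1, if_neg hc2, if_neg hc3, if_pos hc4]
              have e1 : (max (-(-1:ℤ)) 0) = 1 := by norm_num
              have e2 : (-(-(-1:ℤ))) = -1 := by norm_num
              rw [e1, e2, zpow_one, zpow_neg, zpow_one]
              ring
            · by_cases h4 : (2*(m:ℤ)+ε) - j ≡ -3 [ZMOD (2*(n:ℤ))]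
              · have hA : Am n ((2*(m:ℤ)+ε) - j) = -1 := by
                  unfold Am
                  rw [if_neg (by tauto), if_pos (Or.inr h4)]
                have hc1 : ¬ (j+1) ≡ 2*(m:ℤ)+ε [ZMOD (2*(n:ℤ))] :=
                  fun hc => contra2 hn h4 hc 4 (by ring) (by norm_num) (by norm_num)
                have hc2 : ¬ (j-1) ≡ 2*(m:ℤ)+ε [ZMOD (2*(n:ℤ))] :=
                  fun hc => contra2 hn h4 hc 2 (by ring) (by norm_num) (by norm_num)
                have hc3 : (j-3) ≡ 2*(m:ℤ)+ε [ZMOD (2*(n:ℤ))] :=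
                  dv_iff.2 (dv_transfer (dv_iff.1 h4) (by ring))
                have hc4 : ¬ (j+3) ≡ 2*(m:ℤ)+ε [ZMOD (2*(n:ℤ))] :=
                  fun hc => contra2 hn h4 hc 6 (by ring) (by norm_num) (by norm_num)
                rw [hA, if_neg hc1, if_neg hc2, if_pos hc3, if_neg hc4]
                have e1 : (max (-(-1:ℤ)) 0) = 1 := by norm_num
                have e2 : (-(-(-1:ℤ))) = -1 := by norm_num
                rw [e1, e2, zpow_one, zpow_neg, zpow_one]
                ring
              · have hA : Am n ((2*(m:ℤ)+ε) - j) = 0 := by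
                  unfold Am
                  rw [if_neg (by tauto), if_neg (by tauto)]
                have hc1 : ¬ (j+1) ≡ 2*(m:ℤ)+ε [ZMOD (2*(n:ℤ))] :=
                  fun hc => h1 (dv_iff.2 (dv_transfer (dv_iff.1 hc) (by ring)))
                have hc2 : ¬ (j-1) ≡ 2*(m:ℤ)+ε [ZMOD (2*(n:ℤ))] :=
                  fun hc => h2 (dv_iff.2 (dv_transfer (dv_iff.1 hc) (by ring)))
                have hc3 : ¬ (j-3) ≡ 2*(m:ℤ)+ε [ZMOD (2*(n:ℤ))] :=
                  fun hc => h4 (dv_iff.2 (dv_transfer (dv_iff.1 hc) (by ring)))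
                have hc4 : ¬ (j+3) ≡ 2*(m:ℤ)+ε [ZMOD (2*(n:ℤ))] :=
                  fun hc => h3 (dv_iff.2 (dv_transfer (dv_iff.1 hc) (by ring)))
                rw [hA, if_neg hc1, if_neg hc2, if_neg hc3, if_neg hc4]
                have e1 : (max (-(0:ℤ)) 0) = 0 := by norm_num
                have e2 : (-(-(0:ℤ))) = 0 := by norm_num
                rw [e1, e2, zpow_zero, zpow_zero]
                ring
  have hsnd : (mutY n (2*(m:ℤ)+ε) (Yst n ε y m, Bst n ε m)).2 = Bst n ε (m+1) := by
    funext i j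
    simp only [mutY]
    by_cases hik : i ≡ 2*(m:ℤ)+ε [ZMOD (2*(n:ℤ))]
    · rw [if_pos (Or.inl hik)]
      have hEi : ¬ Ed n ε m i := Ed_not_new hm hik
      have hEi' : Ed n ε (m+1) i := Ed_succ.2 (Or.inr hik)
      have hpi : (2:ℤ) ∣ i - ε := by
        have := dv_even (dv_iff.1 hik); omega
      have hCm : Cm n ε m i j = 0 := Finset.sum_eq_zero (fun a _ => by
        rw [Am_even (by omega : (2:ℤ) ∣ i - (2*(a:ℤ)+ε))]; simp)
      have hCm' : Cm n ε (m+1) i j = 0 := Finset.sum_eq_zero (fun a _ => by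
        rw [Am_even (by omega : (2:ℤ) ∣ i - (2*(a:ℤ)+ε))]; simp)
      unfold Bst
      rw [hCm, hCm', add_zero, add_zero]
      by_cases hEj : Ed n ε m j
      · have e2 : Ed n ε (m+1) j := Ed_succ.2 (Or.inl hEj)
        rw [if_neg (fun h => hEi (h.mpr hEj)), if_pos (iff_of_true hEi' e2), neg_neg]
      · by_cases hjk : j ≡ 2*(m:ℤ)+ε [ZMOD (2*(n:ℤ))]
        · have e2 : Ed n ε (m+1) j := Ed_succ.2 (Or.inr hjk)
          have hpj : (2:ℤ) ∣ j - ε := by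
            have := dv_even (dv_iff.1 hjk); omega
          have hMm0 : Mm n ε i j = 0 := by
            unfold Mm
            rcases hpj with ⟨r, hr⟩
            rw [if_pos ⟨r, by omega⟩, Am_even (by omega : (2:ℤ) ∣ i - j)]
          rw [if_pos (iff_of_false hEi hEj), if_pos (iff_of_true hEi' e2), hMm0]
          norm_num
        · have e2 : ¬ Ed n ε (m+1) j := by rw [Ed_succ]; tauto
          rw [if_pos (iff_of_false hEi hEj), if_neg (fun h => e2 (h.mp hEi'))]
    · by_cases hjk : j ≡ 2*(m:ℤ)+ε [ZMOD (2*(n:ℤ))]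
      · rw [if_pos (Or.inr hjk)]
        have hEj : ¬ Ed n ε m j := Ed_not_new hm hjk
        have hEj' : Ed n ε (m+1) j := Ed_succ.2 (Or.inr hjk)
        have hpj : (2:ℤ) ∣ j - ε := by
          have := dv_even (dv_iff.1 hjk); omega
        have hCm : Cm n ε m i j = 0 := Finset.sum_eq_zero (fun a _ => by
          rw [Am_even (by omega : (2:ℤ) ∣ (2*(a:ℤ)+ε) - j)]; simp)
        have hCm' : Cm n ε (m+1) i j = 0 := Finset.sum_eq_zero (fun a _ => by
          rw [Am_even (by omega : (2:ℤ) ∣ (2*(a:ℤ)+ε) - j)]; simp)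
        unfold Bst
        rw [hCm, hCm', add_zero, add_zero]
        have e1 : Ed n ε (m+1) i ↔ Ed n ε m i := by rw [Ed_succ]; tauto
        by_cases hEi : Ed n ε m i
        · rw [if_neg (fun h => hEj (h.mp hEi)), if_pos (iff_of_true (e1.2 hEi) hEj'),
            neg_neg]
        · rw [if_pos (iff_of_false hEi hEj),
            if_neg (fun h => hEi (e1.1 (h.mpr hEj')))]
      · rw [if_neg (by tauto : ¬(i ≡ 2*(m:ℤ)+ε [ZMOD (2*(n:ℤ))] ∨
          j ≡ 2*(m:ℤ)+ε [ZMOD (2*(n:ℤ))])), Bst_col hm, Bst_row hm]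
        have e1 : Ed n ε (m+1) i ↔ Ed n ε m i := by rw [Ed_succ]; tauto
        have e2 : Ed n ε (m+1) j ↔ Ed n ε m j := by rw [Ed_succ]; tauto
        unfold Bst Cm
        rw [Finset.sum_range_succ]
        simp only [e1, e2]
        ring
  exact Prod.ext hfst hsnd

lemma fold {n : ℕ} (hn : 4 ≤ n) {ε : ℤ} {y : ℤ → K}
    (hyper : ∀ j : ℤ, y (j + 2*(n:ℤ)) = y j)
    (m : ℕ) (hm : m ≤ n) :
    (List.range m).foldl (fun q a => mutY n (2*(a:ℤ)+ε) q) (y, Mm n ε) =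
      (Yst n ε y m, Bst n ε m) := by
  induction m with
  | zero =>
    simp only [List.range_zero, List.foldl_nil]
    refine Prod.ext ?_ ?_
    · funext j
      show y j = Yst n ε y 0 j
      unfold Yst facF facG
      rw [if_neg Ed_zero, if_neg Ed_zero, if_neg Ed_zero, if_neg Ed_zero, if_neg Ed_zero]
      ring
    · funext i j
      show Mm n ε i j = Bst n ε 0 i j
      unfold Bst Cm
      rw [if_pos (iff_of_false Ed_zero Ed_zero)]
      simp
  | succ m ih =>
    simp only [bind_pure_comp, List.map_eq_map, List.range_succ, List.map_append,
      List.map_cons, List.map_nil, List.foldl_append, List.foldl_cons,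
      List.foldl_nil] at ih ⊢
    rw [ih (by omega), step hn hyper (by omega)]

lemma pq_cancel (P Q : ℤ) (hP : P = 1 ∨ P = -1 ∨ P = 0) (hQ : Q = 1 ∨ Q = -1 ∨ Q = 0) :
    P.sign * max (P * -Q) 0 + Q.sign * max (Q * -P) 0 = 0 := by
  rcases hP with rfl|rfl|rfl <;> rcases hQ with rfl|rfl|rfl <;> decide

lemma Cm_top {n : ℕ} (hn : 4 ≤ n) {ε i j : ℤ}
    (hi : ¬ (2:ℤ) ∣ i - ε) (hj : ¬ (2:ℤ) ∣ j - ε) :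
    Cm n ε n i j = 0 := by
  obtain ⟨c, hc⟩ : (2:ℤ) ∣ i + j := by omega
  have key : ∀ a : ℕ, ∃ q : ℤ,
      (c - (a:ℤ) - ε) - (((c - (a:ℤ) - ε) % (n:ℤ)).toNat : ℤ) = (n:ℤ) * q := by
    intro a
    rw [Int.toNat_of_nonneg (Int.emod_nonneg _ (by omega : (n:ℤ) ≠ 0)), Int.emod_def]
    exact ⟨(c - (a:ℤ) - ε) / (n:ℤ), by ring⟩
  unfold Cm
  refine Finset.sum_involution (fun a _ => ((c - (a:ℤ) - ε) % (n:ℤ)).toNat) ?_ ?_ ?_ ?_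
  · intro a ha
    rcases key a with ⟨q, hq⟩
    have e1 : Am n (i - (2*((((c - (a:ℤ) - ε) % (n:ℤ)).toNat : ℕ):ℤ)+ε)) =
        Am n ((2*(a:ℤ)+ε) - j) := Am_congr (dv_iff.2 ⟨q, by linarith⟩)
    have e2 : Am n ((2*((((c - (a:ℤ) - ε) % (n:ℤ)).toNat : ℕ):ℤ)+ε) - j) =
        Am n (i - (2*(a:ℤ)+ε)) := Am_congr (dv_iff.2 ⟨-q, by linarith⟩)
    rw [e1, e2]
    exact pq_cancel _ _ (Am_cases n _) (Am_cases n _)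
  · intro a ha hne
    intro heq
    apply hne
    rcases key a with ⟨q, hq⟩
    have heq' : ((c - (a:ℤ) - ε) % (n:ℤ)).toNat = a := heq
    rw [heq'] at hq
    have e2 : Am n ((2*(a:ℤ)+ε) - j) = Am n (i - (2*(a:ℤ)+ε)) :=
      Am_congr (dv_iff.2 ⟨-q, by linarith⟩)
    rw [e2]
    rcases Am_cases n (i - (2*(a:ℤ)+ε)) with h|h|h <;> rw [h] <;> decide
  · intro a ha
    simp only [Finset.mem_range] at *
    have h0 : 0 ≤ (c - (a:ℤ) - ε) % (n:ℤ) := Int.emod_nonneg _ (by omega)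
    have h1 : (c - (a:ℤ) - ε) % (n:ℤ) < (n:ℤ) := Int.emod_lt_of_pos _ (by omega)
    omega
  · intro a ha
    simp only [Finset.mem_range] at ha
    have h0 : 0 ≤ (c - (a:ℤ) - ε) % (n:ℤ) := Int.emod_nonneg _ (by omega)
    rcases key a with ⟨q, hq⟩
    have htn : ((((c - (a:ℤ) - ε) % (n:ℤ)).toNat : ℕ) : ℤ) = (c - (a:ℤ) - ε) % (n:ℤ) :=
      Int.toNat_of_nonneg h0
    have h2 : (c - (((c - (a:ℤ) - ε) % (n:ℤ)).toNat : ℤ) - ε) % (n:ℤ) = (a:ℤ) := by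
      have e : c - (((c - (a:ℤ) - ε) % (n:ℤ)).toNat : ℤ) - ε = (a:ℤ) + (n:ℤ) * q := by
        linarith
      rw [e, Int.add_mul_emod_self_left]
      exact Int.emod_eq_of_lt (by omega) (by exact_mod_cast ha)
    rw [h2]
    simp

lemma Bst_top {n : ℕ} (hn : 4 ≤ n) (ε : ℤ) (i j : ℤ) :
    Bst n ε n i j = -(Mm n ε i j) := by
  have hn0 : 0 < n := by omega
  unfold Bst
  by_cases hi : (2:ℤ) ∣ i - ε <;> by_cases hj : (2:ℤ) ∣ j - ε
  · have hC : Cm n ε n i j = 0 := Finset.sum_eq_zero (fun a _ => by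
      rw [Am_even (by omega : (2:ℤ) ∣ i - (2*(a:ℤ)+ε))]; simp)
    have hM : Mm n ε i j = 0 := by
      unfold Mm
      rw [if_pos (by rcases hj with ⟨r,hr⟩; exact ⟨r, by omega⟩ : Even (j - ε)),
        Am_even (by omega : (2:ℤ) ∣ i - j)]
    rw [hC, hM, if_pos (iff_of_true ((Ed_top hn0).2 hi) ((Ed_top hn0).2 hj))]
    norm_num
  · have hC : Cm n ε n i j = 0 := Finset.sum_eq_zero (fun a _ => by
      rw [Am_even (by omega : (2:ℤ) ∣ i - (2*(a:ℤ)+ε))]; simp)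
    rw [hC, add_zero, if_neg (fun h => hj (Ed_par (h.mp ((Ed_top hn0).2 hi))))]
  · have hC : Cm n ε n i j = 0 := Finset.sum_eq_zero (fun a _ => by
      rw [Am_even (by omega : (2:ℤ) ∣ (2*(a:ℤ)+ε) - j)]; simp)
    rw [hC, add_zero, if_neg (fun h => hi (Ed_par (h.mpr ((Ed_top hn0).2 hj))))]
  · have hC := Cm_top hn hi hj
    have hM : Mm n ε i j = 0 := by
      unfold Mm
      rw [if_neg (by rintro ⟨r,hr⟩; exact hj ⟨r, by omega⟩),
        Am_even (by omega : (2:ℤ) ∣ i - j)]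
      norm_num
    rw [hC, hM, add_zero,
      if_pos (iff_of_false (fun h => hi (Ed_par h)) (fun h => hj (Ed_par h)))]
    norm_num

lemma Yst_top_two {n : ℕ} (hn : 4 ≤ n) {y : ℤ → K} (hy1 : ∀ k : ℤ, 1 + y k ≠ 0) :
    Yst n 2 y n = alpha2 y := by
  have hn0 : 0 < n := by omega
  funext j
  unfold Yst alpha2 facF facG
  by_cases hj : Even j
  · have hd : Ed n 2 n j := (Ed_top hn0).2 (by rcases hj with ⟨r,hr⟩; exact ⟨r-1, by omega⟩)
    rw [if_pos hd, if_pos hj]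
  · have hj' : ¬ (2:ℤ) ∣ j := fun ⟨r, hr⟩ => hj ⟨r, by omega⟩
    rw [if_neg (fun h => hj' (by rcases Ed_par h with ⟨r,hr⟩; exact ⟨r+1, by omega⟩)),
      if_neg hj,
      if_pos ((Ed_top hn0).2 (by omega : (2:ℤ) ∣ (j-3) - 2)),
      if_pos ((Ed_top hn0).2 (by omega : (2:ℤ) ∣ (j-1) - 2)),
      if_pos ((Ed_top hn0).2 (by omega : (2:ℤ) ∣ (j+1) - 2)),
      if_pos ((Ed_top hn0).2 (by omega : (2:ℤ) ∣ (j+3) - 2))]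
    have n3 := hy1 (j-3)
    have p3 := hy1 (j+3)
    field_simp

lemma Yst_top_one {n : ℕ} (hn : 4 ≤ n) {y : ℤ → K} (hy1 : ∀ k : ℤ, 1 + y k ≠ 0) :
    Yst n 1 y n = alpha1 y := by
  have hn0 : 0 < n := by omega
  funext j
  unfold Yst alpha1 facF facG
  by_cases hj : Even j
  · have hj' : (2:ℤ) ∣ j := by rcases hj with ⟨r, hr⟩; exact ⟨r, by omega⟩
    rw [if_neg (fun h => by rcases Ed_par h with ⟨r,hr⟩; rcases hj' with ⟨s,hs⟩; omega),
      if_pos hj,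
      if_pos ((Ed_top hn0).2 (by omega : (2:ℤ) ∣ (j-3) - 1)),
      if_pos ((Ed_top hn0).2 (by omega : (2:ℤ) ∣ (j-1) - 1)),
      if_pos ((Ed_top hn0).2 (by omega : (2:ℤ) ∣ (j+1) - 1)),
      if_pos ((Ed_top hn0).2 (by omega : (2:ℤ) ∣ (j+3) - 1))]
    have n3 := hy1 (j-3)
    have p3 := hy1 (j+3)
    field_simp
  · have hj' : ¬ (2:ℤ) ∣ j := fun ⟨r, hr⟩ => hj ⟨r, by omega⟩
    have hd : Ed n 1 n j := (Ed_top hn0).2 (by omega : (2:ℤ) ∣ j - 1)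
    rw [if_pos hd, if_neg hj]

lemma B0_skew {n : ℕ} (hn : 4 ≤ n) (i j : ℤ) : B0 n j i = -(B0 n i j) := by
  rw [← Mm_two, ← Mm_two]
  have hv : Am n (j - i) = Am n (i - j) := by
    rw [(by ring : j - i = -(i-j)), Am_neg]
  unfold Mm
  by_cases h0 : Am n (i - j) = 0
  · rw [hv, h0]
    simp [h0]
  · have hodd : ¬ (2:ℤ) ∣ (i - j) := Am_odd h0
    by_cases hEi : Even (i - 2)
    · have hEj : ¬ Even (j - 2) := by
        rw [Int.even_iff] at hEi ⊢
        omega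
      rw [if_pos hEi, if_neg hEj, hv]
      ring
    · have hEj : Even (j - 2) := by
        rw [Int.even_iff] at hEi ⊢
        omega
      rw [if_neg hEi, if_pos hEj, hv]

end PentaAux

/-- **Proposition 3.4.**  `B₀` is skew-symmetric, and
`μ_even(y, B₀) = (α₂(y), −B₀)` and `μ_odd(y, −B₀) = (α₁(y), B₀)`, where
`μ_even = μ_{2n}∘⋯∘μ_4∘μ_2` and `μ_odd = μ_{2n−1}∘⋯∘μ_3∘μ_1`. -/
theorem stmt4 {K : Type*} [Field K] (n : ℕ) (hn : 4 ≤ n)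
    (y : ℤ → K)
    (hyper : ∀ j : ℤ, y (j + 2*n) = y j)
    (hy0 : ∀ k : ℤ, y k ≠ 0) (hy1 : ∀ k : ℤ, 1 + y k ≠ 0) :
    -- B₀ is skew-symmetric
    (∀ i j : ℤ, B0 n j i = -(B0 n i j)) ∧
    -- μ_even (y, B₀) = (α₂(y), −B₀)
    ((List.range n).foldl (fun q m => mutY n (2*(m:ℤ)+2) q) (y, B0 n) =
      (alpha2 y, fun i j => -(B0 n i j))) ∧
    -- μ_odd (y, −B₀) = (α₁(y), B₀)
    ((List.range n).foldl (fun q m => mutY n (2*(m:ℤ)+1) q)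
        (y, fun i j => -(B0 n i j)) =
      (alpha1 y, B0 n)) := by
  have hyper' : ∀ j : ℤ, y (j + 2*(n:ℤ)) = y j := hyper
  refine ⟨PentaAux.B0_skew hn, ?_, ?_⟩
  · have h0 : ((y : ℤ → K), B0 n) = (y, PentaAux.Mm n 2) := by
      refine Prod.ext rfl ?_
      funext i j
      exact (PentaAux.Mm_two n i j).symm
    rw [h0, PentaAux.fold hn hyper' n le_rfl]
    refine Prod.ext ?_ ?_
    · exact PentaAux.Yst_top_two hn hy1
    · funext i j
      show PentaAux.Bst n 2 n i j = -(B0 n i j)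
      rw [PentaAux.Bst_top hn 2 i j, PentaAux.Mm_two]
  · have h0 : ((y : ℤ → K), fun i j => -(B0 n i j)) = (y, PentaAux.Mm n 1) := by
      refine Prod.ext rfl ?_
      funext i j
      exact (PentaAux.Mm_one n i j).symm
    rw [h0, PentaAux.fold hn hyper' n le_rfl]
    refine Prod.ext ?_ ?_
    · exact PentaAux.Yst_top_one hn hy1
    · funext i j
      show PentaAux.Bst n 1 n i j = B0 n i j
      rw [PentaAux.Bst_top hn 1 i j, PentaAux.Mm_one, neg_neg]
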